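/- Let X be a normed vector space with a closed generating cone X₊ (i.e., X = X₊ − X₊). A linear map f : X → X satisfies f[X₊] ⊆ X₊ ∪ (−X₊) if and only if either (i) f is positive or −f is positive (i.e., f[X₊] ⊆ X₊ or f[X₊] ⊆ −X₊), or (ii) there exist u ∈ X₊ ∪ (−X₊) and a linear functional ψ on X such that f(x) = ψ(x)·u for all x ∈ X. -/

import Mathlib

/-- A (pointed) cone in a real vector space. -/
def IsCone {X : Type*} [AddCommGroup X] [Module ℝ X] (K : Set X) : Prop :=
  0 ∈ K ∧ (∀ x ∈ K, ∀ y ∈ K, x + y ∈ K) ∧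
    (∀ (c : ℝ), 0 ≤ c → ∀ x ∈ K, c • x ∈ K) ∧ K ∩ (-K) ⊆ {0}

lemma key_lemma {X : Type*} [NormedAddCommGroup X] [NormedSpace ℝ X] {Xp : Set X}
    (hclosed : IsClosed Xp) (hpoint : Xp ∩ (-Xp) ⊆ {0})
    {u v : X} (hu : u ∈ Xp) (hv : v ∈ -Xp) (hu0 : u ≠ 0) (hv0 : v ≠ 0)
    (hseg : ∀ t ∈ Set.Icc (0:ℝ) 1, (1 - t) • u + t • v ∈ Xp ∪ -Xp) :
    ∃ c : ℝ, 0 < c ∧ v = -(c • u) := by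
  set γ : ℝ → X := fun t => (1 - t) • u + t • v with hγdef
  have hγ : Continuous γ := by
    apply Continuous.add
    · exact (continuous_const.sub continuous_id).smul continuous_const
    · exact continuous_id.smul continuous_const
  have hconn : IsPreconnected (Set.Icc (0:ℝ) 1) := isPreconnected_Icc
  obtain ⟨t, htI, ht1, ht2⟩ :=
    isPreconnected_closed_iff.mp hconn (γ ⁻¹' Xp) (γ ⁻¹' (-Xp))
      (hclosed.preimage hγ) (hclosed.neg.preimage hγ)
      (fun t ht => hseg t ht)
      ⟨0, Set.left_mem_Icc.mpr zero_le_one, by simp [hγdef, hu]⟩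
      ⟨1, Set.right_mem_Icc.mpr zero_le_one, by simp [hγdef, hv]⟩
  have hzero : γ t = 0 := hpoint ⟨ht1, ht2⟩
  have ht0 : t ≠ 0 := by
    rintro rfl
    simp [hγdef] at hzero
    exact hu0 hzero
  have htone : t ≠ 1 := by
    rintro rfl
    simp [hγdef] at hzero
    exact hv0 hzero
  have ht0' : 0 < t := lt_of_le_of_ne htI.1 (Ne.symm ht0)
  have ht1' : t < 1 := lt_of_le_of_ne htI.2 htone
  refine ⟨(1 - t) / t, div_pos (by linarith) ht0', ?_⟩
  apply smul_right_injective X (ne_of_gt ht0')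
  have h0 : (1 - t) • u + t • v = 0 := hzero
  show t • v = t • -(((1 - t) / t) • u)
  rw [smul_neg, smul_smul, mul_div_cancel₀ _ (ne_of_gt ht0')]
  linear_combination (norm := module) h0

theorem stmt2 {X : Type*} [NormedAddCommGroup X] [NormedSpace ℝ X]
    (Xp : Set X) (hK : IsCone Xp) (hclosed : IsClosed Xp)
    (hgen : ∀ x : X, ∃ a ∈ Xp, ∃ b ∈ Xp, x = a - b)
    (f : X →ₗ[ℝ] X) :
    (∀ x ∈ Xp, f x ∈ Xp ∪ (-Xp)) ↔
      ((∀ x ∈ Xp, f x ∈ Xp) ∨ (∀ x ∈ Xp, f x ∈ -Xp)) ∨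
        (∃ u ∈ Xp ∪ (-Xp), ∃ ψ : X →ₗ[ℝ] ℝ, ∀ x, f x = ψ x • u) := by
  obtain ⟨hzeroK, haddK, hsmulK, hpoint⟩ := hK
  constructor
  · intro hf
    by_cases h1 : ∀ x ∈ Xp, f x ∈ Xp
    · exact Or.inl (Or.inl h1)
    by_cases h2 : ∀ x ∈ Xp, f x ∈ -Xp
    · exact Or.inl (Or.inr h2)
    right
    push_neg at h1 h2
    obtain ⟨a, haK, hfa⟩ := h1
    obtain ⟨b, hbK, hfb⟩ := h2
    -- f a ∈ -Xp \ {0}, f b ∈ Xp \ {0}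
    have hfa' : f a ∈ -Xp := (hf a haK).resolve_left hfa
    have hfb' : f b ∈ Xp := (hf b hbK).resolve_right hfb
    have hfa0 : f a ≠ 0 := by rintro h; rw [h] at hfa; exact hfa hzeroK
    have hfb0 : f b ≠ 0 := by
      rintro h; rw [h] at hfb; exact hfb (by simpa using hzeroK)
    set u := f b with hudef
    -- segment hypothesis
    have hseg : ∀ x ∈ Xp, ∀ y ∈ Xp, ∀ t ∈ Set.Icc (0:ℝ) 1,
        (1 - t) • f x + t • f y ∈ Xp ∪ -Xp := by
      intro x hx y hy t ht
      have hmem : (1 - t) • x + t • y ∈ Xp :=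
        haddK _ (hsmulK _ (by linarith [ht.2]) _ hx) _ (hsmulK _ ht.1 _ hy)
      have := hf _ hmem
      rwa [map_add, map_smul, map_smul] at this
    -- f a = -c₀ • u
    obtain ⟨c₀, hc₀, hfa_eq⟩ :=
      key_lemma hclosed hpoint hfb' hfa' hfb0 hfa0 (hseg b hbK a haK)
    -- every f x for x ∈ Xp is a multiple of u
    have hmul : ∀ x ∈ Xp, ∃ r : ℝ, f x = r • u := by
      intro x hx
      by_cases hx0 : f x = 0
      · exact ⟨0, by simp [hx0]⟩
      rcases hf x hx with hxp | hxn
      · -- f x ∈ Xp, pair with a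
        obtain ⟨c, hc, heq⟩ :=
          key_lemma hclosed hpoint hxp hfa' hx0 hfa0 (hseg x hx a haK)
        -- f a = -(c • f x) and f a = -(c₀ • u)
        refine ⟨c₀ / c, ?_⟩
        have : c • f x = c₀ • u := by
          have := heq.symm.trans hfa_eq
          exact neg_injective this
        have h2 : (c⁻¹ * c) • f x = (c⁻¹ * c₀) • u := by
          rw [mul_smul, mul_smul, this]
        rwa [inv_mul_cancel₀ (ne_of_gt hc), one_smul, ← div_eq_inv_mul] at h2
      · -- f x ∈ -Xp, pair with b
        obtain ⟨c, hc, heq⟩ :=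
          key_lemma hclosed hpoint hfb' hxn hfb0 hx0 (hseg b hbK x hx)
        exact ⟨-c, by rw [heq, neg_smul]⟩
    -- all of f's range is in span {u}
    have hspan : ∀ x : X, f x ∈ Submodule.span ℝ {u} := by
      intro x
      obtain ⟨p, hp, q, hq, rfl⟩ := hgen x
      rw [map_sub]
      obtain ⟨r, hr⟩ := hmul p hp
      obtain ⟨s, hs⟩ := hmul q hq
      apply Submodule.sub_mem
      · rw [hr]; exact Submodule.smul_mem _ _ (Submodule.mem_span_singleton_self u)
      · rw [hs]; exact Submodule.smul_mem _ _ (Submodule.mem_span_singleton_self u)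
    obtain ⟨g, hgnorm, hgu⟩ := exists_dual_vector ℝ u (norm_ne_zero_iff.mpr hfb0)
    refine ⟨u, Or.inl hfb', (‖u‖)⁻¹ • (g.toLinearMap.comp f), fun x => ?_⟩
    obtain ⟨r, hr⟩ := Submodule.mem_span_singleton.mp (hspan x)
    have hgfx : g (f x) = r * ‖u‖ := by
      rw [← hr, map_smul, hgu]
      simp [mul_comm]
    simp only [LinearMap.smul_apply, LinearMap.coe_comp, Function.comp_apply,
      ContinuousLinearMap.coe_coe, smul_eq_mul]
    have hnu : ‖u‖ ≠ 0 := norm_ne_zero_iff.mpr hfb0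
    have hcoef : ‖u‖⁻¹ * (r * ‖u‖) = r := by field_simp
    rw [hgfx, ← hr, hcoef]
  · rintro (⟨h | h⟩ | ⟨u, hu, ψ, hψ⟩)
    · exact fun x hx => Or.inl (h x hx)
    · exact fun x hx => Or.inr (h x hx)
    · intro x hx
      rw [hψ x]
      rcases hu with hu | hu
      · rcases le_or_gt 0 (ψ x) with h | h
        · exact Or.inl (hsmulK _ h _ hu)
        · right
          rw [Set.mem_neg, ← neg_smul]
          exact hsmulK _ (by linarith) _ hu
      · rcases le_or_gt 0 (ψ x) with h | h
        · right
          rw [Set.mem_neg, ← smul_neg]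
          exact hsmulK _ h _ (Set.mem_neg.mp hu)
        · left
          have := hsmulK _ (by linarith : (0:ℝ) ≤ -ψ x) _ (Set.mem_neg.mp hu)
          rwa [neg_smul, ← smul_neg, neg_neg] at this
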